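/- For any positive integer q and any divisor d of q, the following identity holds: Σ_{e,f | q, gcd(e,f)=d} Σ_{m | q} Σ_{n | q/m, gcd(e/d, nm) = n} Σ_{t | q/m, gcd(f/d, tm) = t} φ(nm)·φ(tm)·φ(q/e)·φ(q/f)/φ(m) = q · J₂(q/d), where J₂(r) = Σ_{s | r} s²·μ(r/s) is the Jordan totient function of order 2. -/

import Mathlib

open scoped Classical

/-- The Jordan totient function of order 2: `J₂(r) = ∑_{s ∣ r} s²·μ(r/s)`. -/
def J2 (r : ℕ) : ℤ :=
  ∑ s ∈ r.divisors, (s : ℤ) ^ 2 * ArithmeticFunction.moebius (r / s)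

open Nat Finset ArithmeticFunction

theorem gcd_cond_iff' (a n m : ℕ) (hn : 0 < n) :
    Nat.gcd a (n*m) = n ↔ n ∣ a ∧ Nat.Coprime (a/n) m := by
  constructor
  · intro h
    have hna : n ∣ a := h ▸ Nat.gcd_dvd_left a (n*m)
    refine ⟨hna, ?_⟩
    rw [← Nat.div_mul_cancel hna, Nat.mul_comm (a/n) n, Nat.gcd_mul_left] at h
    have : n * Nat.gcd (a/n) m = n * 1 := by omega
    exact Nat.eq_of_mul_eq_mul_left hn this
  · rintro ⟨hna, hcop⟩
    conv_lhs => rw [← Nat.div_mul_cancel hna, Nat.mul_comm (a/n) n, Nat.gcd_mul_left]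
    rw [hcop]; ring

theorem totA' (n t m : ℕ) (ht : 0 < t) (hm : 0 < m) (h : Nat.Coprime n t) :
    φ (n*m) * φ (t*m) = φ (n*t*m) * φ m := by
  have e1 := Nat.totient_gcd_mul_totient_mul (n*m) t
  have e2 := Nat.totient_gcd_mul_totient_mul m t
  have hg : Nat.gcd (n*m) t = Nat.gcd m t := Nat.Coprime.gcd_mul_left_cancel m h
  rw [hg] at e1
  have hpos : 0 < φ t * Nat.gcd m t := by
    have h1 := Nat.totient_pos.mpr ht
    have h2 : 0 < Nat.gcd m t := Nat.gcd_pos_of_pos_left t hm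
    positivity
  apply Nat.eq_of_mul_eq_mul_right hpos
  have hc1 : n*m*t = n*t*m := by ring
  have hc2 : t*m = m*t := by ring
  calc φ (n*m) * φ (t*m) * (φ t * Nat.gcd m t)
      = (φ (n*m) * φ t * Nat.gcd m t) * φ (t*m) := by ring
    _ = (φ (Nat.gcd m t) * φ (n*m*t)) * φ (t*m) := by rw [e1]
    _ = φ (n*t*m) * (φ (Nat.gcd m t) * φ (m*t)) := by rw [hc1, hc2]; ring
    _ = φ (n*t*m) * (φ m * φ t * Nat.gcd m t) := by rw [e2]
    _ = φ (n*t*m) * φ m * (φ t * Nat.gcd m t) := by ring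

theorem tripleSum' (q a b : ℕ) (hq : 0 < q) (ha : a ∣ q) (hb : b ∣ q)
    (hab : Nat.Coprime a b) :
    ∑ m ∈ q.divisors, ∑ n ∈ ((q/m).divisors.filter fun n => Nat.gcd a (n*m) = n),
      ∑ t ∈ ((q/m).divisors.filter fun t => Nat.gcd b (t*m) = t), φ (n*t*m) = q := by
  have ha0 : 0 < a := Nat.pos_of_dvd_of_pos ha hq
  have hb0 : 0 < b := Nat.pos_of_dvd_of_pos hb hq
  have hsplit : ∀ m, m ∣ q → ∀ (c : ℕ → Prop) [DecidablePred c],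
      (q/m).divisors.filter c = q.divisors.filter (fun n => n ∣ q/m ∧ c n) := by
    intro m hm c _
    rw [← Nat.divisors_filter_dvd_of_dvd hq.ne' (Nat.div_dvd_of_dvd hm), filter_filter]
  have step1 : ∑ m ∈ q.divisors, ∑ n ∈ ((q/m).divisors.filter fun n => Nat.gcd a (n*m) = n),
      ∑ t ∈ ((q/m).divisors.filter fun t => Nat.gcd b (t*m) = t), φ (n*t*m)
      = ∑ x ∈ ((q.divisors ×ˢ q.divisors ×ˢ q.divisors).filter
          (fun x : ℕ × ℕ × ℕ => (x.2.1 ∣ q/x.1 ∧ Nat.gcd a (x.2.1*x.1) = x.2.1)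
            ∧ (x.2.2 ∣ q/x.1 ∧ Nat.gcd b (x.2.2*x.1) = x.2.2))),
          φ (x.2.1 * x.2.2 * x.1) := by
    rw [Finset.sum_filter, Finset.sum_product, ]
    apply Finset.sum_congr rfl
    intro m hm
    have hmq : m ∣ q := (Nat.mem_divisors.mp hm).1
    rw [hsplit m hmq, Finset.sum_filter, Finset.sum_product]
    apply Finset.sum_congr rfl
    intro n hn
    rw [hsplit m hmq, Finset.sum_filter]
    by_cases h1 : n ∣ q/m ∧ Nat.gcd a (n*m) = n
    · simp only [h1, if_true, true_and]
    · simp only [h1, if_false]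
      rw [Finset.sum_eq_zero]
      intro t ht
      simp [h1]
  rw [step1]
  have step2 : ∑ x ∈ ((q.divisors ×ˢ q.divisors ×ˢ q.divisors).filter
          (fun x : ℕ × ℕ × ℕ => (x.2.1 ∣ q/x.1 ∧ Nat.gcd a (x.2.1*x.1) = x.2.1)
            ∧ (x.2.2 ∣ q/x.1 ∧ Nat.gcd b (x.2.2*x.1) = x.2.2))),
          φ (x.2.1 * x.2.2 * x.1) = ∑ k ∈ q.divisors, φ k := by
    apply Finset.sum_nbij' (i := fun x : ℕ × ℕ × ℕ => x.2.1 * x.2.2 * x.1)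
      (j := fun k => (k / (Nat.gcd a k * Nat.gcd b k), Nat.gcd a k, Nat.gcd b k))
    · -- forward membership
      rintro ⟨m, n, t⟩ hx
      simp only [Finset.mem_filter, Finset.mem_product, Nat.mem_divisors] at hx
      obtain ⟨⟨⟨hmq, -⟩, ⟨hnq, -⟩, ⟨htq, -⟩⟩, ⟨hndvd, hngcd⟩, ⟨htdvd, htgcd⟩⟩ := hx
      have hm0 : 0 < m := Nat.pos_of_dvd_of_pos hmq hq
      have hn0 : 0 < n := Nat.pos_of_dvd_of_pos hnq hq
      have ht0 : 0 < t := Nat.pos_of_dvd_of_pos htq hq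
      obtain ⟨hna, -⟩ := (gcd_cond_iff' a n m hn0).mp hngcd
      obtain ⟨htb, -⟩ := (gcd_cond_iff' b t m ht0).mp htgcd
      have hnt : Nat.Coprime n t :=
        Nat.Coprime.coprime_dvd_left hna (Nat.Coprime.coprime_dvd_right htb hab)
      have hntq : n * t ∣ q / m := Nat.Coprime.mul_dvd_of_dvd_of_dvd hnt hndvd htdvd
      rw [Nat.dvd_div_iff_mul_dvd hmq] at hntq
      exact Nat.mem_divisors.mpr ⟨by rwa [mul_comm m (n*t)] at hntq, hq.ne'⟩
    · -- backward membership
      intro k hk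
      obtain ⟨hkq, -⟩ := Nat.mem_divisors.mp hk
      have hk0 : 0 < k := Nat.pos_of_dvd_of_pos hkq hq
      set n := Nat.gcd a k with hn
      set t := Nat.gcd b k with ht
      have hn0 : 0 < n := Nat.gcd_pos_of_pos_left k ha0
      have ht0 : 0 < t := Nat.gcd_pos_of_pos_left k hb0
      have hnt : Nat.Coprime n t :=
        Nat.Coprime.coprime_dvd_left (Nat.gcd_dvd_left a k)
          (Nat.Coprime.coprime_dvd_right (Nat.gcd_dvd_left b k) hab)
      have hntk : n * t ∣ k :=
        Nat.Coprime.mul_dvd_of_dvd_of_dvd hnt (Nat.gcd_dvd_right a k) (Nat.gcd_dvd_right b k)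
      set m := k / (n * t) with hm
      have hkey : n * t * m = k := Nat.mul_div_cancel' hntk
      have hmq : m ∣ q := dvd_trans (Dvd.intro_left (n*t) hkey) hkq
      have hm0 : 0 < m := Nat.pos_of_dvd_of_pos hmq hq
      have hkn : k / n = t * m := by
        rw [← hkey]; rw [mul_assoc, Nat.mul_div_cancel_left _ hn0]
      have hkt : k / t = n * m := by
        rw [← hkey]
        rw [show n*t*m = t*(n*m) by ring, Nat.mul_div_cancel_left _ ht0]
      have hcopan : Nat.Coprime (a/n) m := by
        have h1 := Nat.coprime_div_gcd_div_gcd (m := a) (n := k) hn0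
        have h2 : m ∣ k / n := by rw [hkn]; exact Dvd.intro t (mul_comm m t)
        exact Nat.Coprime.coprime_dvd_right h2 h1
      have hcopbt : Nat.Coprime (b/t) m := by
        have h1 := Nat.coprime_div_gcd_div_gcd (m := b) (n := k) ht0
        have h2 : m ∣ k / t := by rw [hkt]; exact Dvd.intro n (mul_comm m n)
        exact Nat.Coprime.coprime_dvd_right h2 h1
      simp only [Finset.mem_filter, Finset.mem_product, Nat.mem_divisors]
      refine ⟨⟨⟨hmq, hq.ne'⟩, ⟨dvd_trans (Nat.gcd_dvd_right a k) hkq, hq.ne'⟩,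
        ⟨dvd_trans (Nat.gcd_dvd_right b k) hkq, hq.ne'⟩⟩, ⟨?_, ?_⟩, ⟨?_, ?_⟩⟩
      · rw [Nat.dvd_div_iff_mul_dvd hmq, mul_comm m n]
        exact dvd_trans (by rw [← hkt]; exact Nat.div_dvd_of_dvd (Nat.gcd_dvd_right b k)) hkq
      · exact (gcd_cond_iff' a n m hn0).mpr ⟨Nat.gcd_dvd_left a k, hcopan⟩
      · rw [Nat.dvd_div_iff_mul_dvd hmq, mul_comm m t]
        exact dvd_trans (by rw [← hkn]; exact Nat.div_dvd_of_dvd (Nat.gcd_dvd_right a k)) hkq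
      · exact (gcd_cond_iff' b t m ht0).mpr ⟨Nat.gcd_dvd_left b k, hcopbt⟩
    · -- left inverse
      rintro ⟨m, n, t⟩ hx
      simp only [Finset.mem_filter, Finset.mem_product, Nat.mem_divisors] at hx
      obtain ⟨⟨⟨hmq, -⟩, ⟨hnq, -⟩, ⟨htq, -⟩⟩, ⟨hndvd, hngcd⟩, ⟨htdvd, htgcd⟩⟩ := hx
      have hm0 : 0 < m := Nat.pos_of_dvd_of_pos hmq hq
      have hn0 : 0 < n := Nat.pos_of_dvd_of_pos hnq hq
      have ht0 : 0 < t := Nat.pos_of_dvd_of_pos htq hq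
      obtain ⟨hna, hcan⟩ := (gcd_cond_iff' a n m hn0).mp hngcd
      obtain ⟨htb, hcbt⟩ := (gcd_cond_iff' b t m ht0).mp htgcd
      have hcant : Nat.Coprime (a/n) t :=
        Nat.Coprime.coprime_dvd_left (Nat.div_dvd_of_dvd hna)
          (Nat.Coprime.coprime_dvd_right htb hab)
      have hcbtn : Nat.Coprime (b/t) n :=
        Nat.Coprime.coprime_dvd_left (Nat.div_dvd_of_dvd htb)
          (Nat.Coprime.coprime_dvd_right hna (Nat.Coprime.symm hab))
      have hgA : Nat.gcd a (n*t*m) = n := by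
        conv_lhs => rw [← Nat.div_mul_cancel hna, Nat.mul_comm (a/n) n, mul_assoc,
          Nat.gcd_mul_left]
        rw [Nat.Coprime.mul_right hcant hcan]; ring
      have hgB : Nat.gcd b (n*t*m) = t := by
        conv_lhs => rw [← Nat.div_mul_cancel htb, Nat.mul_comm (b/t) t,
          show n*t*m = t*(n*m) by ring, Nat.gcd_mul_left]
        rw [Nat.Coprime.mul_right hcbtn hcbt]; ring
      simp only [hgA, hgB]
      refine Prod.ext ?_ (Prod.ext rfl rfl)
      simp only
      rw [Nat.mul_div_cancel_left _ (Nat.mul_pos hn0 ht0)]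
    · -- right inverse
      intro k hk
      obtain ⟨hkq, -⟩ := Nat.mem_divisors.mp hk
      have hk0 : 0 < k := Nat.pos_of_dvd_of_pos hkq hq
      have hnt : Nat.Coprime (Nat.gcd a k) (Nat.gcd b k) :=
        Nat.Coprime.coprime_dvd_left (Nat.gcd_dvd_left a k)
          (Nat.Coprime.coprime_dvd_right (Nat.gcd_dvd_left b k) hab)
      have hntk : Nat.gcd a k * Nat.gcd b k ∣ k :=
        Nat.Coprime.mul_dvd_of_dvd_of_dvd hnt (Nat.gcd_dvd_right a k) (Nat.gcd_dvd_right b k)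
      simp only
      rw [Nat.mul_div_cancel' hntk]
    · -- summand equality
      rintro ⟨m, n, t⟩ _
      rfl
  rw [step2, Nat.sum_totient]

theorem innerSumNat (r k : ℕ) (hr : 0 < r) (hk : k ∣ r) :
    ∑ a ∈ r.divisors.filter (fun a => k ∣ a), φ (r/a) = r/k := by
  have hk0 : 0 < k := Nat.pos_of_dvd_of_pos hk hr
  have hrk : r / k ∣ r := Nat.div_dvd_of_dvd hk
  have step : ∑ a ∈ r.divisors.filter (fun a => k ∣ a), φ (r/a)
      = ∑ c ∈ (r/k).divisors, φ ((r/k)/c) := by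
    apply Finset.sum_nbij' (i := fun a => a / k) (j := fun c => k * c)
    · intro a ha
      simp only [Finset.mem_filter, Nat.mem_divisors] at ha
      obtain ⟨⟨har, -⟩, hka⟩ := ha
      refine Nat.mem_divisors.mpr ⟨?_, ?_⟩
      · obtain ⟨c, rfl⟩ := hka
        rw [Nat.mul_div_cancel_left _ hk0]
        exact Nat.dvd_div_of_mul_dvd har
      · exact Nat.ne_of_gt (Nat.div_pos (Nat.le_of_dvd hr hk) hk0)
    · intro c hc
      obtain ⟨hcd, -⟩ := Nat.mem_divisors.mp hc
      rw [Nat.dvd_div_iff_mul_dvd hk] at hcd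
      exact Finset.mem_filter.mpr ⟨Nat.mem_divisors.mpr ⟨hcd, hr.ne'⟩, Dvd.intro c rfl⟩
    · intro a ha
      simp only [Finset.mem_filter] at ha
      exact Nat.mul_div_cancel' ha.2
    · intro c hc
      exact Nat.mul_div_cancel_left _ hk0
    · intro a ha
      simp only [Finset.mem_filter] at ha
      rw [Nat.div_div_eq_div_mul, Nat.mul_div_cancel' ha.2]
  rw [step, Nat.sum_div_divisors, Nat.sum_totient]

theorem moeb_ind (g : ℕ) :
    (∑ k ∈ g.divisors, (ArithmeticFunction.moebius k : ℤ)) = if g = 1 then 1 else 0 := by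
  rw [← coe_mul_zeta_apply, moebius_mul_coe_zeta, one_apply]

theorem innerSum' (r k : ℕ) (hr : 0 < r) (hk : k ∣ r) :
    ∑ a ∈ r.divisors, (if k ∣ a then (φ (r/a) : ℤ) else 0) = ((r/k : ℕ) : ℤ) := by
  rw [← Finset.sum_filter]
  exact_mod_cast congrArg (Nat.cast : ℕ → ℤ) (innerSumNat r k hr hk)

theorem copSum (r : ℕ) (hr : 0 < r) :
    ∑ a ∈ r.divisors, ∑ b ∈ r.divisors,
      (if Nat.gcd a b = 1 then (φ (r/a) : ℤ) * φ (r/b) else 0) = J2 r := by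
  have step1 : ∀ a ∈ r.divisors, ∀ b ∈ r.divisors,
      (if Nat.gcd a b = 1 then (φ (r/a) : ℤ) * φ (r/b) else 0)
      = ∑ k ∈ r.divisors, (if k ∣ a ∧ k ∣ b then (moebius k : ℤ) * (φ (r/a) * φ (r/b)) else 0) := by
    intro a ha b hb
    have harr : a ∣ r := (Nat.mem_divisors.mp ha).1
    have hg : Nat.gcd a b ∣ r := dvd_trans (Nat.gcd_dvd_left a b) harr
    have h2 : r.divisors.filter (fun k => k ∣ a ∧ k ∣ b) = (Nat.gcd a b).divisors := by
      rw [← Nat.divisors_filter_dvd_of_dvd hr.ne' hg]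
      apply Finset.filter_congr
      intro k _
      constructor
      · rintro ⟨h1, h2⟩; exact Nat.dvd_gcd h1 h2
      · intro h; exact ⟨dvd_trans h (Nat.gcd_dvd_left a b), dvd_trans h (Nat.gcd_dvd_right a b)⟩
    calc (if Nat.gcd a b = 1 then (φ (r/a) : ℤ) * φ (r/b) else 0)
        = (if Nat.gcd a b = 1 then (1:ℤ) else 0) * (φ (r/a) * φ (r/b)) := by
          by_cases h : Nat.gcd a b = 1 <;> simp [h]
      _ = (∑ k ∈ (Nat.gcd a b).divisors, (moebius k : ℤ)) * (φ (r/a) * φ (r/b)) := by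
          rw [moeb_ind]
      _ = (∑ k ∈ r.divisors.filter (fun k => k ∣ a ∧ k ∣ b), (moebius k : ℤ)) * (φ (r/a) * φ (r/b)) := by
          rw [h2]
      _ = _ := by
          rw [Finset.sum_filter, Finset.sum_mul]
          apply Finset.sum_congr rfl
          intro k _
          by_cases h : k ∣ a ∧ k ∣ b <;> simp [h]
  rw [Finset.sum_congr rfl (fun a ha => Finset.sum_congr rfl (fun b hb => step1 a ha b hb))]
  -- swap sums
  have swap : ∑ a ∈ r.divisors, ∑ b ∈ r.divisors, ∑ k ∈ r.divisors,
      (if k ∣ a ∧ k ∣ b then (moebius k : ℤ) * (φ (r/a) * φ (r/b)) else 0)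
      = ∑ k ∈ r.divisors, ∑ a ∈ r.divisors, ∑ b ∈ r.divisors,
      (if k ∣ a ∧ k ∣ b then (moebius k : ℤ) * (φ (r/a) * φ (r/b)) else 0) := by
    calc ∑ a ∈ r.divisors, ∑ b ∈ r.divisors, ∑ k ∈ r.divisors,
        (if k ∣ a ∧ k ∣ b then (moebius k : ℤ) * (φ (r/a) * φ (r/b)) else 0)
        = ∑ a ∈ r.divisors, ∑ k ∈ r.divisors, ∑ b ∈ r.divisors,
        (if k ∣ a ∧ k ∣ b then (moebius k : ℤ) * (φ (r/a) * φ (r/b)) else 0) :=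
          Finset.sum_congr rfl (fun a _ => Finset.sum_comm)
      _ = _ := Finset.sum_comm
  rw [swap]
  have step2 : ∀ k ∈ r.divisors, ∑ a ∈ r.divisors, ∑ b ∈ r.divisors,
      (if k ∣ a ∧ k ∣ b then (moebius k : ℤ) * (φ (r/a) * φ (r/b)) else 0)
      = (moebius k : ℤ) * ((r/k : ℕ) : ℤ) * ((r/k : ℕ) : ℤ) := by
    intro k hk
    have hkr : k ∣ r := (Nat.mem_divisors.mp hk).1
    have : ∀ a b : ℕ, (if k ∣ a ∧ k ∣ b then (moebius k : ℤ) * (φ (r/a) * φ (r/b)) else 0)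
        = (moebius k : ℤ) * ((if k ∣ a then (φ (r/a) : ℤ) else 0) * (if k ∣ b then (φ (r/b) : ℤ) else 0)) := by
      intro a b
      by_cases h1 : k ∣ a <;> by_cases h2 : k ∣ b <;> simp [h1, h2]
    simp_rw [this, ← Finset.mul_sum, ← Finset.sum_mul, innerSum' r k hr hkr]
    ring
  rw [Finset.sum_congr rfl step2]
  -- now equal J2
  unfold J2
  rw [← Nat.sum_div_divisors r (fun s => (s : ℤ)^2 * moebius (r/s))]
  apply Finset.sum_congr rfl
  intro k hk
  have hkr : k ∣ r := (Nat.mem_divisors.mp hk).1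
  rw [Nat.div_div_self hkr hr.ne']
  ring

theorem pairReindex (q d : ℕ) (hq : 0 < q) (hd : d ∣ q) :
    ∑ e ∈ q.divisors, ∑ f ∈ q.divisors,
      (if Nat.gcd e f = d then (φ (q/e) : ℚ) * φ (q/f) else 0)
    = ∑ a ∈ (q/d).divisors, ∑ b ∈ (q/d).divisors,
      (if Nat.gcd a b = 1 then (φ ((q/d)/a) : ℚ) * φ ((q/d)/b) else 0) := by
  have hd0 : 0 < d := Nat.pos_of_dvd_of_pos hd hq
  have hr0 : 0 < q / d := Nat.div_pos (Nat.le_of_dvd hq hd) hd0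
  rw [← Finset.sum_product', ← Finset.sum_product']
  rw [← Finset.sum_filter, ← Finset.sum_filter]
  apply Finset.sum_nbij' (i := fun x : ℕ × ℕ => (x.1 / d, x.2 / d))
    (j := fun y : ℕ × ℕ => (d * y.1, d * y.2))
  · rintro ⟨e, f⟩ hx
    simp only [Finset.mem_filter, Finset.mem_product, Nat.mem_divisors] at hx ⊢
    obtain ⟨⟨⟨heq, -⟩, ⟨hfq, -⟩⟩, hef⟩ := hx
    have hde : d ∣ e := hef ▸ Nat.gcd_dvd_left e f
    have hdf : d ∣ f := hef ▸ Nat.gcd_dvd_right e f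
    have h1 : e / d ∣ q / d := by
      rw [Nat.dvd_div_iff_mul_dvd hd, Nat.mul_div_cancel' hde]; exact heq
    have h2 : f / d ∣ q / d := by
      rw [Nat.dvd_div_iff_mul_dvd hd, Nat.mul_div_cancel' hdf]; exact hfq
    refine ⟨⟨⟨h1, hr0.ne'⟩, ⟨h2, hr0.ne'⟩⟩, ?_⟩
    rw [← hef]
    exact Nat.coprime_div_gcd_div_gcd (hef ▸ hd0)
  · rintro ⟨a, b⟩ hy
    simp only [Finset.mem_filter, Finset.mem_product, Nat.mem_divisors] at hy ⊢
    obtain ⟨⟨⟨har, -⟩, ⟨hbr, -⟩⟩, hab⟩ := hy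
    have h1 : d * a ∣ q := by
      have := Nat.mul_dvd_mul_left d har
      rwa [Nat.mul_div_cancel' hd] at this
    have h2 : d * b ∣ q := by
      have := Nat.mul_dvd_mul_left d hbr
      rwa [Nat.mul_div_cancel' hd] at this
    refine ⟨⟨⟨h1, hq.ne'⟩, ⟨h2, hq.ne'⟩⟩, ?_⟩
    rw [Nat.gcd_mul_left, hab, mul_one]
  · rintro ⟨e, f⟩ hx
    simp only [Finset.mem_filter, Finset.mem_product, Nat.mem_divisors] at hx
    obtain ⟨-, hef⟩ := hx
    have hde : d ∣ e := hef ▸ Nat.gcd_dvd_left e f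
    have hdf : d ∣ f := hef ▸ Nat.gcd_dvd_right e f
    simp only
    rw [Nat.mul_div_cancel' hde, Nat.mul_div_cancel' hdf]
  · rintro ⟨a, b⟩ _
    simp only
    rw [Nat.mul_div_cancel_left _ hd0, Nat.mul_div_cancel_left _ hd0]
  · rintro ⟨e, f⟩ hx
    simp only [Finset.mem_filter, Finset.mem_product, Nat.mem_divisors] at hx
    obtain ⟨-, hef⟩ := hx
    have hde : d ∣ e := hef ▸ Nat.gcd_dvd_left e f
    have hdf : d ∣ f := hef ▸ Nat.gcd_dvd_right e f
    simp only
    rw [Nat.div_div_eq_div_mul, Nat.div_div_eq_div_mul,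
      Nat.mul_div_cancel' hde, Nat.mul_div_cancel' hdf]


/-- for `d ∣ q`,
`∑_{e,f ∣ q, (e,f)=d} ∑_{m ∣ q} ∑_{n ∣ q/m, (e/d, nm)=n} ∑_{t ∣ q/m, (f/d, tm)=t}
  φ(nm)φ(tm)φ(q/e)φ(q/f)/φ(m) = q·J₂(q/d)`. -/
theorem stmt_11 (q d : ℕ) (hq : 0 < q) (hd : d ∣ q) :
    (∑ e ∈ q.divisors, ∑ f ∈ q.divisors,
      if Nat.gcd e f = d then
        ∑ m ∈ q.divisors,
          ∑ n ∈ ((q / m).divisors.filter fun n => Nat.gcd (e / d) (n * m) = n),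
            ∑ t ∈ ((q / m).divisors.filter fun t => Nat.gcd (f / d) (t * m) = t),
              ((Nat.totient (n * m) : ℚ) * Nat.totient (t * m) *
                Nat.totient (q / e) * Nat.totient (q / f)) / Nat.totient m
      else 0) = (q : ℚ) * (J2 (q / d) : ℚ) := by
  have hd0 : 0 < d := Nat.pos_of_dvd_of_pos hd hq
  have hr0 : 0 < q / d := Nat.div_pos (Nat.le_of_dvd hq hd) hd0
  have key : ∀ e ∈ q.divisors, ∀ f ∈ q.divisors,
      (if Nat.gcd e f = d then
        ∑ m ∈ q.divisors,
          ∑ n ∈ ((q / m).divisors.filter fun n => Nat.gcd (e / d) (n * m) = n),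
            ∑ t ∈ ((q / m).divisors.filter fun t => Nat.gcd (f / d) (t * m) = t),
              ((Nat.totient (n * m) : ℚ) * Nat.totient (t * m) *
                Nat.totient (q / e) * Nat.totient (q / f)) / Nat.totient m
      else 0)
      = (if Nat.gcd e f = d then (q : ℚ) * ((φ (q/e) : ℚ) * φ (q/f)) else 0) := by
    intro e he f hf
    by_cases hef : Nat.gcd e f = d
    · simp only [hef, if_true]
      have heq : e ∣ q := (Nat.mem_divisors.mp he).1
      have hfq : f ∣ q := (Nat.mem_divisors.mp hf).1
      have hde : d ∣ e := hef ▸ Nat.gcd_dvd_left e f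
      have hdf : d ∣ f := hef ▸ Nat.gcd_dvd_right e f
      have ha : e / d ∣ q := dvd_trans (Nat.div_dvd_of_dvd hde) heq
      have hb : f / d ∣ q := dvd_trans (Nat.div_dvd_of_dvd hdf) hfq
      have hab : Nat.Coprime (e/d) (f/d) := by
        rw [← hef]
        exact Nat.coprime_div_gcd_div_gcd (hef ▸ hd0)
      have inner : ∀ m ∈ q.divisors,
          (∑ n ∈ ((q / m).divisors.filter fun n => Nat.gcd (e / d) (n * m) = n),
            ∑ t ∈ ((q / m).divisors.filter fun t => Nat.gcd (f / d) (t * m) = t),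
              ((Nat.totient (n * m) : ℚ) * Nat.totient (t * m) *
                Nat.totient (q / e) * Nat.totient (q / f)) / Nat.totient m)
          = ∑ n ∈ ((q / m).divisors.filter fun n => Nat.gcd (e / d) (n * m) = n),
            ∑ t ∈ ((q / m).divisors.filter fun t => Nat.gcd (f / d) (t * m) = t),
              (φ (n * t * m) : ℚ) * ((φ (q/e) : ℚ) * φ (q/f)) := by
        intro m hm
        have hmq : m ∣ q := (Nat.mem_divisors.mp hm).1
        have hm0 : 0 < m := Nat.pos_of_dvd_of_pos hmq hq
        apply Finset.sum_congr rfl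
        intro n hn
        apply Finset.sum_congr rfl
        intro t ht
        simp only [Finset.mem_filter, Nat.mem_divisors] at hn ht
        obtain ⟨⟨hnqm, -⟩, hngcd⟩ := hn
        obtain ⟨⟨htqm, -⟩, htgcd⟩ := ht
        have hqm0 : 0 < q / m := Nat.div_pos (Nat.le_of_dvd hq hmq) hm0
        have hn0 : 0 < n := Nat.pos_of_dvd_of_pos hnqm hqm0
        have ht0 : 0 < t := Nat.pos_of_dvd_of_pos htqm hqm0
        obtain ⟨hna, -⟩ := (gcd_cond_iff' (e/d) n m hn0).mp hngcd
        obtain ⟨htb, -⟩ := (gcd_cond_iff' (f/d) t m ht0).mp htgcd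
        have hnt : Nat.Coprime n t :=
          Nat.Coprime.coprime_dvd_left hna (Nat.Coprime.coprime_dvd_right htb hab)
        have htot := totA' n t m ht0 hm0 hnt
        have hcast : (φ (n*m) : ℚ) * φ (t*m) = (φ (n*t*m) : ℚ) * φ m := by
          exact_mod_cast congrArg (Nat.cast : ℕ → ℚ) htot
        have hφm : (φ m : ℚ) ≠ 0 :=
          Nat.cast_ne_zero.mpr (Nat.totient_pos.mpr hm0).ne'
        rw [div_eq_iff hφm]
        linear_combination hcast * ((φ (q/e) : ℚ) * (φ (q/f) : ℚ))
      rw [Finset.sum_congr rfl inner]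
      simp_rw [← Finset.sum_mul]
      have := tripleSum' q (e/d) (f/d) hq ha hb hab
      have hcast : (∑ m ∈ q.divisors,
          ∑ n ∈ ((q / m).divisors.filter fun n => Nat.gcd (e / d) (n * m) = n),
            ∑ t ∈ ((q / m).divisors.filter fun t => Nat.gcd (f / d) (t * m) = t),
              (φ (n * t * m) : ℚ)) = (q : ℚ) := by
        exact_mod_cast congrArg (Nat.cast : ℕ → ℚ) this
      rw [hcast]
    · simp only [hef, if_false]
  rw [Finset.sum_congr rfl (fun e he => Finset.sum_congr rfl (fun f hf => key e he f hf))]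
  have pull : ∀ e f : ℕ,
      (if Nat.gcd e f = d then (q : ℚ) * ((φ (q/e) : ℚ) * φ (q/f)) else 0)
      = (q : ℚ) * (if Nat.gcd e f = d then (φ (q/e) : ℚ) * φ (q/f) else 0) := by
    intro e f
    by_cases h : Nat.gcd e f = d <;> simp [h]
  simp_rw [pull, ← Finset.mul_sum]
  congr 1
  rw [pairReindex q d hq hd]
  have := copSum (q/d) hr0
  calc ∑ a ∈ (q/d).divisors, ∑ b ∈ (q/d).divisors,
      (if Nat.gcd a b = 1 then (φ ((q/d)/a) : ℚ) * φ ((q/d)/b) else 0)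
      = ((∑ a ∈ (q/d).divisors, ∑ b ∈ (q/d).divisors,
      (if Nat.gcd a b = 1 then (φ ((q/d)/a) : ℤ) * φ ((q/d)/b) else 0) : ℤ) : ℚ) := by
        push_cast
        rfl
    _ = ((J2 (q/d) : ℤ) : ℚ) := by rw [this]
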